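/- Let (x, s) ∈ int(K) × int(K) satisfy ‖R_{xs} − ν̇ I‖ ≤ τ̇ ν̇ (operator 2-norm) for some scalars τ̇ ∈ (0,1) and ν̇ > 0. Suppose u, v, h ∈ ℝ^n satisfy S u + X v = h and uᵀv ≥ 0, and define δ_u = ‖T_x^{−1} u‖ and δ_v = ‖T_x v‖. Then δ_u ≤ ‖T_x X^{−1} h‖ / ((1 − τ̇) ν̇) and δ_v ≤ 2 ‖T_x X^{−1} h‖ / (1 − τ̇). -/

import Mathlib

open scoped BigOperators
open Matrix

namespace SOCP

/-- Index type for a block vector with `k` blocks, block `i` having dimension `d i + 1`. -/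
abbrev Idx {k : ℕ} (d : Fin k → ℕ) : Type := (i : Fin k) × Fin (d i + 1)

/-- The `i`-th block of a block vector. -/
def blk {k : ℕ} {d : Fin k → ℕ} (v : Idx d → ℝ) (i : Fin k) : Fin (d i + 1) → ℝ :=
  fun j => v ⟨i, j⟩

/-- Squared Euclidean norm of the tail `u_{2:m}` of a single block. -/
def tailNormSq {m : ℕ} (u : Fin (m + 1) → ℝ) : ℝ := ∑ j : Fin m, u j.succ ^ 2

/-- Euclidean norm of the tail `u_{2:m}` of a single block. -/
noncomputable def tailNorm {m : ℕ} (u : Fin (m + 1) → ℝ) : ℝ := Real.sqrt (tailNormSq u)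

/-- Membership in the cone `K` (a direct product of second-order cones). -/
def inK {k : ℕ} {d : Fin k → ℕ} (v : Idx d → ℝ) : Prop :=
  ∀ i : Fin k, tailNorm (blk v i) ≤ v ⟨i, 0⟩

/-- Membership in the interior of the cone `K`. -/
def inIntK {k : ℕ} {d : Fin k → ℕ} (v : Idx d → ℝ) : Prop :=
  ∀ i : Fin k, tailNorm (blk v i) < v ⟨i, 0⟩

/-- Euclidean inner product of vectors. -/
def dotV {ι : Type*} [Fintype ι] (u v : ι → ℝ) : ℝ := ∑ a, u a * v a

/-- Euclidean norm of a vector. -/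
noncomputable def vnorm {ι : Type*} [Fintype ι] (v : ι → ℝ) : ℝ :=
  Real.sqrt (∑ a, v a ^ 2)

/-- Blockwise Jordan product. -/
def jmul {k : ℕ} {d : Fin k → ℕ} (u v : Idx d → ℝ) : Idx d → ℝ := fun a =>
  if a.2 = 0 then ∑ j, u ⟨a.1, j⟩ * v ⟨a.1, j⟩
  else u ⟨a.1, 0⟩ * v a + v ⟨a.1, 0⟩ * u a

/-- The unit element `e` of the Jordan algebra. -/
def unitE {k : ℕ} {d : Fin k → ℕ} : Idx d → ℝ := fun a => if a.2 = 0 then 1 else 0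

/-- `λ_min` of the `i`-th block. -/
noncomputable def lamMin {k : ℕ} {d : Fin k → ℕ} (v : Idx d → ℝ) (i : Fin k) : ℝ :=
  v ⟨i, 0⟩ - tailNorm (blk v i)

/-- `λ_max` of the `i`-th block. -/
noncomputable def lamMax {k : ℕ} {d : Fin k → ℕ} (v : Idx d → ℝ) (i : Fin k) : ℝ :=
  v ⟨i, 0⟩ + tailNorm (blk v i)

/-- Arrow-head matrix of a single block. -/
def arrowBlk {m : ℕ} (u : Fin (m + 1) → ℝ) : Matrix (Fin (m + 1)) (Fin (m + 1)) ℝ :=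
  Matrix.of fun j j' =>
    if j = 0 then u j' else if j' = 0 then u j else if j = j' then u 0 else 0

/-- Arrow-head matrix `mat(v)` (block diagonal). -/
def matV {k : ℕ} {d : Fin k → ℕ} (v : Idx d → ℝ) : Matrix (Idx d) (Idx d) ℝ :=
  Matrix.blockDiagonal' fun i => arrowBlk (blk v i)

/-- `β_u = sqrt(u_1^2 - ‖u_{2:m}‖^2)` for a single block. -/
noncomputable def betaOf {m : ℕ} (u : Fin (m + 1) → ℝ) : ℝ :=
  Real.sqrt (u 0 ^ 2 - tailNormSq u)

/-- The matrix `T_u` for a single block. -/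
noncomputable def Tblk {m : ℕ} (u : Fin (m + 1) → ℝ) :
    Matrix (Fin (m + 1)) (Fin (m + 1)) ℝ :=
  Matrix.of fun j j' =>
    if j = 0 then u j'
    else if j' = 0 then u j
    else (if j = j' then betaOf u else 0) + u j * u j' / (betaOf u + u 0)

/-- The matrix `T_x` (block diagonal). -/
noncomputable def TV {k : ℕ} {d : Fin k → ℕ} (x : Idx d → ℝ) :
    Matrix (Idx d) (Idx d) ℝ :=
  Matrix.blockDiagonal' fun i => Tblk (blk x i)

/-- `w_{xs} = T_x s`. -/
noncomputable def wxs {k : ℕ} {d : Fin k → ℕ} (x s : Idx d → ℝ) : Idx d → ℝ :=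
  (TV x).mulVec s

/-- Central-path coefficient `μ(x,s) = xᵀs/k`. -/
noncomputable def muV {k : ℕ} {d : Fin k → ℕ} (x s : Idx d → ℝ) : ℝ :=
  dotV x s / (k : ℝ)

/-- Central-path distance `d_2(x,s) = √2 ‖w_{xs} - μ e‖`. -/
noncomputable def d2 {k : ℕ} {d : Fin k → ℕ} (x s : Idx d → ℝ) : ℝ :=
  Real.sqrt 2 * vnorm (wxs x s - muV x s • unitE)

/-- Central-path distance `d_∞(x,s)`. -/
noncomputable def dInf {k : ℕ} {d : Fin k → ℕ} (x s : Idx d → ℝ) : ℝ :=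
  ⨆ i : Fin k, max |lamMax (wxs x s) i - muV x s| |lamMin (wxs x s) i - muV x s|

/-- The matrix `Q = diag(1, -I)` for a single block. -/
def Qblk {m : ℕ} : Matrix (Fin (m + 1)) (Fin (m + 1)) ℝ :=
  Matrix.of fun j j' => if j = j' then (if j = 0 then (1 : ℝ) else -1) else 0

/-- The scaling group `G` of block matrices `Θ G` with `(Gⁱ)ᵀ Qⁱ Gⁱ = Qⁱ`. -/
def scalingGroup {k : ℕ} (d : Fin k → ℕ) : Set (Matrix (Idx d) (Idx d) ℝ) :=
  { D | ∃ (θ : Fin k → ℝ) (G : ∀ i, Matrix (Fin (d i + 1)) (Fin (d i + 1)) ℝ),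
      (∀ i, 0 < θ i) ∧ (∀ i, (G i)ᵀ * Qblk * G i = Qblk) ∧
      D = Matrix.blockDiagonal' fun i => θ i • G i }

/-- Operator 2-norm of a matrix. -/
noncomputable def op2 {m n : Type*} [Fintype m] [Fintype n] [DecidableEq n]
    (M : Matrix m n ℝ) : ℝ :=
  ‖LinearMap.toContinuousLinearMap (Matrix.toEuclideanLin M)‖

/-- `R_{xs} = T_x X⁻¹ S T_x`. -/
noncomputable def Rxs {k : ℕ} {d : Fin k → ℕ} (x s : Idx d → ℝ) :
    Matrix (Idx d) (Idx d) ℝ :=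
  TV x * (matV x)⁻¹ * matV s * TV x

/-- The scaled Newton system of the infeasible IPM (Monteiro–Zhang family). -/
def NewtonSys {k p : ℕ} {d : Fin k → ℕ} (A : Matrix (Fin p) (Idx d) ℝ)
    (Cm : Matrix (Idx d) (Idx d) ℝ) (x : Idx d → ℝ) (y : Fin p → ℝ) (s : Idx d → ℝ)
    (ν : ℝ) (D : Matrix (Idx d) (Idx d) ℝ)
    (dx : Idx d → ℝ) (dy : Fin p → ℝ) (ds : Idx d → ℝ) : Prop :=
  A.mulVec dx = -((1 - ν) • A.mulVec x) ∧
  Aᵀ.mulVec dy + Cm.mulVec dx + ds =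
    -((1 - ν) • (Aᵀ.mulVec y + Cm.mulVec x + s)) ∧
  (matV ((D⁻¹)ᵀ.mulVec x)).mulVec (D.mulVec ds)
      + (matV (D.mulVec s)).mulVec ((D⁻¹)ᵀ.mulVec dx)
    = (ν * muV x s) • unitE - jmul ((D⁻¹)ᵀ.mulVec x) (D.mulVec s)

/-- Central-path neighborhood `N_2(γ)`. -/
def N2 {k : ℕ} (d : Fin k → ℕ) (p : ℕ) (γ : ℝ) :
    Set ((Idx d → ℝ) × (Fin p → ℝ) × (Idx d → ℝ)) :=
  { z | inIntK z.1 ∧ inIntK z.2.2 ∧ d2 z.1 z.2.2 ≤ γ * muV z.1 z.2.2 }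

/-- Central-path neighborhood `N_∞(γ)`. -/
def NInf {k : ℕ} (d : Fin k → ℕ) (p : ℕ) (γ : ℝ) :
    Set ((Idx d → ℝ) × (Fin p → ℝ) × (Idx d → ℝ)) :=
  { z | inIntK z.1 ∧ inIntK z.2.2 ∧ dInf z.1 z.2.2 ≤ γ * muV z.1 z.2.2 }

/-- The matrix `U_u` for a single block: zero first row and column and lower-right block
`(u_1 - β_u) P_u`, with `P_u` the projection onto the complement of the tail of `u`
(zero when the tail vanishes). -/
noncomputable def Ublk {m : ℕ} (u : Fin (m + 1) → ℝ) :
    Matrix (Fin (m + 1)) (Fin (m + 1)) ℝ :=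
  Matrix.of fun j j' =>
    if j = 0 ∨ j' = 0 then 0
    else if tailNormSq u = 0 then 0
    else (u 0 - betaOf u) * ((if j = j' then (1 : ℝ) else 0) - u j * u j' / tailNormSq u)

/-- The block-diagonal matrix `U_x`. -/
noncomputable def UV {k : ℕ} {d : Fin k → ℕ} (x : Idx d → ℝ) :
    Matrix (Idx d) (Idx d) ℝ :=
  Matrix.blockDiagonal' fun i => Ublk (blk x i)

/-- `Γ_p = 2 (γ²/2 + (1-ν)² k)^{1/2} / (1 - 3γ)`. -/
noncomputable def GammaP (γ ν : ℝ) (k : ℕ) : ℝ :=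
  2 * Real.sqrt (γ ^ 2 / 2 + (1 - ν) ^ 2 * k) / (1 - 3 * γ)

/-- `Γ̃ = (4(γ² + δ²)/(1-3γ)²) (1 - δ/√(2k))⁻¹`. -/
noncomputable def GammaTilde (γ δ : ℝ) (k : ℕ) : ℝ :=
  4 * (γ ^ 2 + δ ^ 2) / (1 - 3 * γ) ^ 2 * (1 - δ / Real.sqrt (2 * k))⁻¹

section Aux

variable {ι : Type*} [Fintype ι]

lemma tailNormSq_nonneg {m : ℕ} (u : Fin (m + 1) → ℝ) : 0 ≤ tailNormSq u :=
  Finset.sum_nonneg fun _ _ => sq_nonneg _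

lemma vnorm_eq_norm (v : ι → ℝ) : vnorm v = ‖(WithLp.equiv 2 (ι → ℝ)).symm v‖ := by
  rw [EuclideanSpace.norm_eq, vnorm]
  congr 1
  exact Finset.sum_congr rfl fun i _ => by
    rw [WithLp.equiv_symm_apply, PiLp.toLp_apply, Real.norm_eq_abs, sq_abs]

lemma dotV_eq_inner (u v : ι → ℝ) :
    dotV u v = (inner ℝ ((WithLp.equiv 2 (ι → ℝ)).symm u) ((WithLp.equiv 2 (ι → ℝ)).symm v) : ℝ) := by
  rw [PiLp.inner_apply, dotV]
  exact Finset.sum_congr rfl fun i _ => by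
    rw [WithLp.equiv_symm_apply, PiLp.toLp_apply, PiLp.toLp_apply, RCLike.inner_apply', conj_trivial]

lemma vnorm_nonneg (v : ι → ℝ) : 0 ≤ vnorm v := Real.sqrt_nonneg _

lemma abs_dotV_le (u v : ι → ℝ) : |dotV u v| ≤ vnorm u * vnorm v := by
  rw [dotV_eq_inner, vnorm_eq_norm, vnorm_eq_norm]
  exact abs_real_inner_le_norm _ _

lemma vnorm_add_le (u v : ι → ℝ) : vnorm (u + v) ≤ vnorm u + vnorm v := by
  rw [vnorm_eq_norm, vnorm_eq_norm, vnorm_eq_norm, WithLp.equiv_symm_apply, WithLp.toLp_add]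
  exact norm_add_le _ _

lemma vnorm_sub_le (u v : ι → ℝ) : vnorm (u - v) ≤ vnorm u + vnorm v := by
  rw [vnorm_eq_norm, vnorm_eq_norm, vnorm_eq_norm, WithLp.equiv_symm_apply, WithLp.toLp_sub]
  exact norm_sub_le _ _

lemma vnorm_smul (c : ℝ) (v : ι → ℝ) : vnorm (c • v) = |c| * vnorm v := by
  rw [vnorm_eq_norm, vnorm_eq_norm, WithLp.equiv_symm_apply, WithLp.toLp_smul, norm_smul, Real.norm_eq_abs]

lemma vnorm_mulVec_le [DecidableEq ι] (M : Matrix ι ι ℝ) (z : ι → ℝ) :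
    vnorm (M.mulVec z) ≤ op2 M * vnorm z := by
  have := (LinearMap.toContinuousLinearMap (Matrix.toEuclideanLin M)).le_opNorm
    ((WithLp.equiv 2 (ι → ℝ)).symm z)
  rw [LinearMap.coe_toContinuousLinearMap'] at this
  rw [vnorm_eq_norm, vnorm_eq_norm]
  exact this

end Aux

section Blocks

theorem arrow_form {m : ℕ} (b z : Fin (m+1) → ℝ) :
    z ⬝ᵥ (arrowBlk b *ᵥ z) = b 0 * z 0^2 + 2 * z 0 * (∑ i : Fin m, b i.succ * z i.succ)
      + b 0 * (∑ i : Fin m, z i.succ ^2) := by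
  simp only [dotProduct, mulVec, arrowBlk, of_apply, Fin.sum_univ_succ,
    Fin.succ_ne_zero, if_false, if_true, eq_self_iff_true, Fin.succ_inj]
  simp [Finset.mul_sum, Finset.sum_ite_eq', Finset.sum_add_distrib]
  rw [Finset.sum_congr rfl (fun (i : Fin m) _ =>
    (by ring : z i.succ * (b i.succ * z 0 + b 0 * z i.succ)
      = z 0 * (b i.succ * z i.succ) + b 0 * z i.succ^2)),
    Finset.sum_add_distrib, ← Finset.mul_sum, ← Finset.mul_sum, ← Finset.mul_sum]
  ring

theorem tblk_form {m : ℕ} (b z : Fin (m+1) → ℝ) :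
    z ⬝ᵥ (Tblk b *ᵥ z) = b 0 * z 0^2 + 2 * z 0 * (∑ i : Fin m, b i.succ * z i.succ)
      + betaOf b * (∑ i : Fin m, z i.succ ^2)
      + (∑ i : Fin m, b i.succ * z i.succ)^2 / (betaOf b + b 0) := by
  simp only [dotProduct, mulVec, Tblk, of_apply, Fin.sum_univ_succ,
    Fin.succ_ne_zero, if_false, if_true, eq_self_iff_true, Fin.succ_inj]
  simp [Finset.mul_sum, Finset.sum_ite_eq', Finset.sum_add_distrib, add_mul, mul_add]
  have e1 : (∑ x : Fin m, z x.succ * (b x.succ * z 0))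
      = z 0 * ∑ i : Fin m, b i.succ * z i.succ := by
    rw [Finset.mul_sum]; exact Finset.sum_congr rfl fun x _ => by ring
  have e2 : (∑ x : Fin m, z x.succ * (betaOf b * z x.succ))
      = betaOf b * ∑ i : Fin m, z i.succ ^ 2 := by
    rw [Finset.mul_sum]; exact Finset.sum_congr rfl fun x _ => by ring
  have e3 : (∑ x : Fin m, ∑ i : Fin m,
        z x.succ * (b x.succ * b i.succ / (betaOf b + b 0) * z i.succ))
      = (∑ i : Fin m, b i.succ * z i.succ) ^ 2 / (betaOf b + b 0) := by
    rw [sq, Finset.sum_mul, Finset.sum_div]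
    refine Finset.sum_congr rfl fun x _ => ?_
    rw [Finset.mul_sum, Finset.sum_div]
    exact Finset.sum_congr rfl fun i _ => by ring
  have e0 : (∑ i : Fin m, z 0 * (b i.succ * z i.succ))
      = z 0 * ∑ i : Fin m, b i.succ * z i.succ := (Finset.mul_sum _ _ _).symm
  have e4 : (∑ i : Fin m, 2 * z 0 * (b i.succ * z i.succ))
      = 2 * z 0 * ∑ i : Fin m, b i.succ * z i.succ := (Finset.mul_sum _ _ _).symm
  have e5 : (∑ i : Fin m, betaOf b * z i.succ ^ 2)
      = betaOf b * ∑ i : Fin m, z i.succ ^ 2 := (Finset.mul_sum _ _ _).symm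
  rw [e0, e1, e2, e3, e4, e5]
  ring

lemma cs_tail {m : ℕ} (b z : Fin (m+1) → ℝ) :
    (∑ i : Fin m, b i.succ * z i.succ)^2 ≤ tailNormSq b * (∑ i : Fin m, z i.succ ^2) :=
  Finset.sum_mul_sq_le_sq_mul_sq Finset.univ (fun i : Fin m => b i.succ) (fun i : Fin m => z i.succ)

lemma block_facts {m : ℕ} {b : Fin (m+1) → ℝ} (hb : tailNorm b < b 0) :
    0 < b 0 ∧ tailNormSq b < b 0 ^ 2 := by
  have h0 : 0 ≤ tailNorm b := Real.sqrt_nonneg _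
  have hb0 : 0 < b 0 := lt_of_le_of_lt h0 hb
  have : tailNormSq b = tailNorm b ^ 2 := (Real.sq_sqrt (tailNormSq_nonneg b)).symm
  refine ⟨hb0, ?_⟩
  rw [this]
  exact pow_lt_pow_left₀ hb h0 two_ne_zero

lemma nonzero_decomp {m : ℕ} {z : Fin (m+1) → ℝ} (hz : z ≠ 0) :
    0 < z 0 ^ 2 + ∑ i : Fin m, z i.succ ^ 2 := by
  have hsum : 0 ≤ ∑ i : Fin m, z i.succ ^ 2 := Finset.sum_nonneg fun _ _ => sq_nonneg _
  obtain ⟨j, hj⟩ := Function.ne_iff.mp hz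
  rcases Fin.eq_zero_or_eq_succ j with rfl | ⟨i, rfl⟩
  · have : 0 < z 0 ^ 2 := by rw [← sq_abs]; exact pow_pos (abs_pos.mpr hj) 2
    linarith
  · have h1 : 0 < z i.succ ^ 2 := by rw [← sq_abs]; exact pow_pos (abs_pos.mpr hj) 2
    have h2 : z i.succ ^ 2 ≤ ∑ i' : Fin m, z i'.succ ^ 2 :=
      Finset.single_le_sum (f := fun i' : Fin m => z i'.succ ^ 2)
        (fun _ _ => sq_nonneg _) (Finset.mem_univ i)
    have : 0 ≤ z 0 ^ 2 := sq_nonneg _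
    linarith

lemma arrowBlk_posDef {m : ℕ} {b : Fin (m+1) → ℝ} (hb : tailNorm b < b 0) :
    (arrowBlk b).PosDef := by
  obtain ⟨hb0, hW2⟩ := block_facts hb
  refine Matrix.PosDef.of_dotProduct_mulVec_pos ?_ ?_
  · ext j j'
    simp only [conjTranspose_apply, arrowBlk, of_apply, star_trivial]
    by_cases h1 : j = 0 <;> by_cases h2 : j' = 0 <;>
      simp [h1, h2, eq_comm (a := j) (b := j')]
  · intro z hz
    have hpos := nonzero_decomp hz
    have ht := cs_tail b z
    have hc2 : (0:ℝ) ≤ ∑ i : Fin m, z i.succ ^ 2 := Finset.sum_nonneg fun _ _ => sq_nonneg _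
    rw [star_trivial, arrow_form]
    set a := z 0; set t := ∑ i : Fin m, b i.succ * z i.succ
    set c2 := ∑ i : Fin m, z i.succ ^ 2; set W2 := tailNormSq b
    have hW2n : 0 ≤ W2 := tailNormSq_nonneg b
    rcases hc2.eq_or_lt with h | h
    · have ht0 : t = 0 := by
        have h1 : t^2 ≤ 0 := by rw [← h] at ht; linarith [ht]
        nlinarith [sq_nonneg t]
      have ha : 0 < a^2 := by rw [← h] at hpos; linarith
      rw [ht0, ← h]; nlinarith [mul_pos hb0 ha]
    · nlinarith [sq_nonneg (b 0 * a + t), mul_pos (sub_pos.2 hW2) h]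

lemma betaOf_facts {m : ℕ} {b : Fin (m+1) → ℝ} (hb : tailNorm b < b 0) :
    0 < betaOf b ∧ betaOf b ^ 2 = b 0 ^ 2 - tailNormSq b := by
  obtain ⟨hb0, hW2⟩ := block_facts hb
  have hpos : 0 < b 0 ^ 2 - tailNormSq b := by linarith
  exact ⟨Real.sqrt_pos.mpr hpos, Real.sq_sqrt hpos.le⟩

lemma Tblk_posDef {m : ℕ} {b : Fin (m+1) → ℝ} (hb : tailNorm b < b 0) :
    (Tblk b).PosDef := by
  obtain ⟨hb0, hW2⟩ := block_facts hb
  obtain ⟨hβ, hβ2⟩ := betaOf_facts hb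
  refine Matrix.PosDef.of_dotProduct_mulVec_pos ?_ ?_
  · ext j j'
    simp only [conjTranspose_apply, Tblk, of_apply, star_trivial]
    by_cases h1 : j = 0 <;> by_cases h2 : j' = 0 <;>
      simp [h1, h2, eq_comm (a := j) (b := j'), mul_comm]
  · intro z hz
    have hpos := nonzero_decomp hz
    have ht := cs_tail b z
    have hc2 : (0:ℝ) ≤ ∑ i : Fin m, z i.succ ^ 2 := Finset.sum_nonneg fun _ _ => sq_nonneg _
    rw [star_trivial, tblk_form]
    set a := z 0; set t := ∑ i : Fin m, b i.succ * z i.succ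
    set c2 := ∑ i : Fin m, z i.succ ^ 2; set W2 := tailNormSq b
    set β := betaOf b
    have hβb0 : 0 < β + b 0 := by linarith
    have key : 0 < (β + b 0) * (b 0 * a^2 + 2*a*t + β*c2) + t^2 := by
      rcases hc2.eq_or_lt with h | h
      · have ht0 : t = 0 := by
          have h1 : t^2 ≤ 0 := by rw [← h] at ht; linarith [ht]
          nlinarith [sq_nonneg t]
        have ha : 0 < a^2 := by rw [← h] at hpos; linarith
        rw [ht0, ← h]; nlinarith [mul_pos (add_pos hβ hb0) (mul_pos hb0 ha)]
      · have ht' : t^2 ≤ (b 0^2 - β^2) * c2 := by nlinarith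
        nlinarith [mul_nonneg (add_pos hβ hb0).le (sq_nonneg (b 0 * a + t)),
          mul_le_mul_of_nonneg_left ht' hβ.le,
          mul_pos (mul_pos hβ hβ) (mul_pos hb0 h),
          mul_pos (mul_pos (mul_pos hβ hβ) hβ) h]
    have : b 0 * a^2 + 2*a*t + β*c2 + t^2/(β + b 0)
        = ((β + b 0) * (b 0 * a^2 + 2*a*t + β*c2) + t^2) / (β + b 0) := by
      field_simp
    rw [this]
    exact div_pos key hβb0

end Blocks

section BD

variable {k : ℕ} {d : Fin k → ℕ}

lemma bd_mulVec (M : ∀ i, Matrix (Fin (d i + 1)) (Fin (d i + 1)) ℝ) (z : Idx d → ℝ)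
    (a : Idx d) :
    (Matrix.blockDiagonal' M *ᵥ z) a = (M a.1 *ᵥ blk z a.1) a.2 := by
  obtain ⟨i, j⟩ := a
  rw [mulVec, dotProduct, ← Finset.univ_sigma_univ, Finset.sum_sigma]
  rw [Finset.sum_eq_single_of_mem i (Finset.mem_univ i)]
  · simp [mulVec, dotProduct, Matrix.blockDiagonal'_apply_eq, blk]
  · intro i' _ hne
    apply Finset.sum_eq_zero
    intro j' _
    rw [Matrix.blockDiagonal'_apply_ne _ _ _ (Ne.symm hne), zero_mul]

lemma bd_dot (z w : Idx d → ℝ) : z ⬝ᵥ w = ∑ i : Fin k, blk z i ⬝ᵥ blk w i := by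
  rw [dotProduct, ← Finset.univ_sigma_univ, Finset.sum_sigma]
  exact Finset.sum_congr rfl fun i _ => rfl

lemma bd_posDef {M : ∀ i, Matrix (Fin (d i + 1)) (Fin (d i + 1)) ℝ}
    (hM : ∀ i, (M i).PosDef) : (Matrix.blockDiagonal' M).PosDef := by
  refine Matrix.PosDef.of_dotProduct_mulVec_pos ?_ ?_
  · show (Matrix.blockDiagonal' M)ᴴ = _
    rw [Matrix.blockDiagonal'_conjTranspose]
    exact congrArg _ (funext fun i => (hM i).1)
  · intro z hz
    rw [star_trivial]
    have : (Matrix.blockDiagonal' M *ᵥ z) = fun a : Idx d => (M a.1 *ᵥ blk z a.1) a.2 :=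
      funext fun a => bd_mulVec M z a
    rw [this]
    rw [bd_dot]
    obtain ⟨a, ha⟩ := Function.ne_iff.mp hz
    have hblk : blk z a.1 ≠ 0 := fun hc => ha (by
      have := congrFun hc a.2
      simpa [blk] using this)
    refine Finset.sum_pos' (fun i _ => ?_) ⟨a.1, Finset.mem_univ _, ?_⟩
    · have := (hM i).posSemidef.dotProduct_mulVec_nonneg (blk z i)
      rwa [star_trivial] at this
    · have := (hM a.1).dotProduct_mulVec_pos hblk
      rwa [star_trivial] at this

lemma TV_posDef {x : Idx d → ℝ} (hx : inIntK x) : (TV x).PosDef :=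
  bd_posDef fun i => Tblk_posDef (hx i)

lemma matV_posDef {x : Idx d → ℝ} (hx : inIntK x) : (matV x).PosDef :=
  bd_posDef fun i => arrowBlk_posDef (hx i)

end BD

lemma herm_transpose_eq {n : Type*} [Fintype n] {M : Matrix n n ℝ} (h : M.IsHermitian) :
    Mᵀ = M := by
  ext i j
  have := congrFun (congrFun h i) j
  simpa [Matrix.conjTranspose_apply] using this

lemma dotV_eq_dotProduct {ι : Type*} [Fintype ι] (u v : ι → ℝ) : dotV u v = u ⬝ᵥ v := rfl

lemma dotV_self_eq {ι : Type*} [Fintype ι] (w : ι → ℝ) : dotV w w = vnorm w ^ 2 := by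
  rw [vnorm, Real.sq_sqrt (Finset.sum_nonneg fun _ _ => sq_nonneg _), dotV]
  exact Finset.sum_congr rfl fun a _ => (sq (w a)) ▸ (pow_two (w a)).symm

theorem scaled_solution_bounds' {k : ℕ} {d : Fin k → ℕ}
    (x s : Idx d → ℝ) (hx : inIntK x) (hs : inIntK s)
    (τ' ν' : ℝ) (hτ : τ' ∈ Set.Ioo (0 : ℝ) 1) (hν : 0 < ν')
    (hR : op2 (Rxs x s - ν' • (1 : Matrix (Idx d) (Idx d) ℝ)) ≤ τ' * ν')
    (u v h : Idx d → ℝ)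
    (huv : (matV s).mulVec u + (matV x).mulVec v = h) (hdot : 0 ≤ dotV u v) :
    vnorm ((TV x)⁻¹.mulVec u) ≤ vnorm ((TV x * (matV x)⁻¹).mulVec h) / ((1 - τ') * ν') ∧
    vnorm ((TV x).mulVec v) ≤ 2 * vnorm ((TV x * (matV x)⁻¹).mulVec h) / (1 - τ') := by
  obtain ⟨hτ0, hτ1⟩ := hτ
  have hτ1' : 0 < 1 - τ' := by linarith
  have hTpd := TV_posDef hx
  have hXpd := matV_posDef hx
  set T := TV x with hTdef
  set X := matV x with hXdef
  set S := matV s with hSdef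
  have hTdetu : IsUnit T.det := (Matrix.isUnit_iff_isUnit_det _).mp hTpd.isUnit
  have hXdetu : IsUnit X.det := (Matrix.isUnit_iff_isUnit_det _).mp hXpd.isUnit
  have hTT : T * T⁻¹ = 1 := Matrix.mul_nonsing_inv _ hTdetu
  have hX'X : X⁻¹ * X = 1 := Matrix.nonsing_inv_mul _ hXdetu
  have hTsymm : Tᵀ = T := herm_transpose_eq hTpd.1
  set ut := T⁻¹ *ᵥ u with hut
  set vt := T *ᵥ v with hvt
  set R := Rxs x s with hRdef
  set ht := (T * X⁻¹) *ᵥ h with hht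
  set Em := R - ν' • (1 : Matrix (Idx d) (Idx d) ℝ) with hEm
  have hReq : R = T * X⁻¹ * S * T := by rw [hRdef, hTdef, hXdef, hSdef]; rfl
  have hRT : R * T⁻¹ = T * X⁻¹ * S := by
    rw [hReq, mul_assoc (T * X⁻¹ * S) T T⁻¹, hTT, mul_one]
  have hA : ht = R *ᵥ ut + vt := by
    rw [hht, ← huv, Matrix.mulVec_add]
    congr 1
    · rw [hut, Matrix.mulVec_mulVec, Matrix.mulVec_mulVec, hRT]
    · rw [Matrix.mulVec_mulVec, mul_assoc, hX'X, mul_one]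
  have hutT : ut ᵥ* T = u := by
    rw [← hTsymm, Matrix.vecMul_transpose, hut, Matrix.mulVec_mulVec, hTT,
      Matrix.one_mulVec]
  have hB : dotV ut vt = dotV u v := by
    rw [dotV_eq_dotProduct, dotV_eq_dotProduct, hvt, Matrix.dotProduct_mulVec, hutT]
  have hRu : R *ᵥ ut = ν' • ut + Em *ᵥ ut := by
    rw [hEm, Matrix.sub_mulVec, Matrix.smul_mulVec, Matrix.one_mulVec]
    abel
  set δu := vnorm ut with hδu
  set H := vnorm ht with hH
  have hδu0 : 0 ≤ δu := vnorm_nonneg _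
  have hH0 : 0 ≤ H := vnorm_nonneg _
  have hEbound : |dotV ut (Em *ᵥ ut)| ≤ τ' * ν' * δu^2 := by
    calc |dotV ut (Em *ᵥ ut)| ≤ δu * vnorm (Em *ᵥ ut) := abs_dotV_le _ _
    _ ≤ δu * (op2 Em * δu) :=
        mul_le_mul_of_nonneg_left (vnorm_mulVec_le _ _) hδu0
    _ ≤ δu * ((τ' * ν') * δu) :=
        mul_le_mul_of_nonneg_left (mul_le_mul_of_nonneg_right hR hδu0) hδu0
    _ = τ' * ν' * δu^2 := by ring
  have hsplit : dotV ut ht = ν' * δu^2 + dotV ut vt + dotV ut (Em *ᵥ ut) := by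
    rw [hA, hRu]
    rw [dotV_eq_dotProduct, dotProduct_add, dotProduct_add,
      dotProduct_smul]
    rw [dotV_eq_dotProduct, dotV_eq_dotProduct, ← dotV_eq_dotProduct ut ut,
      dotV_self_eq]
    simp only [smul_eq_mul]
    ring_nf
    rw [← hδu]
  have hutht : dotV ut ht ≤ δu * H := le_trans (le_abs_self _) (abs_dotV_le _ _)
  have hkey : (1 - τ') * ν' * δu^2 ≤ δu * H := by
    have h1 : ν' * δu^2 = dotV ut ht - dotV ut vt - dotV ut (Em *ᵥ ut) := by
      rw [hsplit]; ring
    have h2 : -(dotV ut (Em *ᵥ ut)) ≤ τ' * ν' * δu^2 := by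
      have := neg_abs_le (dotV ut (Em *ᵥ ut)); linarith
    rw [hB] at h1
    nlinarith [hdot, hutht]
  have hbound1 : δu ≤ H / ((1 - τ') * ν') := by
    rcases hδu0.eq_or_lt with h0 | h0
    · rw [← h0]
      exact div_nonneg hH0 (by positivity)
    · rw [le_div_iff₀ (by positivity)]
      have h3 : δu * ((1 - τ') * ν') * δu ≤ H * δu := by nlinarith [hkey]
      exact le_of_mul_le_mul_right h3 h0
  refine ⟨hbound1, ?_⟩
  have hvt_eq : vt = ht - R *ᵥ ut := by rw [hA]; abel
  have hbound2 : vnorm vt ≤ H + (1 + τ') * ν' * δu := by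
    rw [hvt_eq]
    calc vnorm (ht - R *ᵥ ut) ≤ H + vnorm (R *ᵥ ut) := vnorm_sub_le _ _
    _ ≤ H + (1 + τ') * ν' * δu := by
        have : vnorm (R *ᵥ ut) ≤ ν' * δu + τ' * ν' * δu := by
          rw [hRu]
          calc vnorm (ν' • ut + Em *ᵥ ut) ≤ vnorm (ν' • ut) + vnorm (Em *ᵥ ut) :=
              vnorm_add_le _ _
          _ ≤ ν' * δu + τ' * ν' * δu := by
              rw [vnorm_smul, abs_of_pos hν]
              have h1 : vnorm (Em *ᵥ ut) ≤ op2 Em * δu := vnorm_mulVec_le _ _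
              have h2 : op2 Em * δu ≤ τ' * ν' * δu :=
                mul_le_mul_of_nonneg_right hR hδu0
              linarith
        linarith
  calc vnorm vt ≤ H + (1 + τ') * ν' * δu := hbound2
  _ ≤ H + (1 + τ') * ν' * (H / ((1 - τ') * ν')) := by
      have : (0:ℝ) ≤ (1 + τ') * ν' := by positivity
      nlinarith [hbound1]
  _ = 2 * H / (1 - τ') := by
      field_simp
      ring


/-- Lemma 4: bounds on the scaled solutions of `S u + X v = h`. -/
theorem scaled_solution_bounds {k : ℕ} {d : Fin k → ℕ}
    (x s : Idx d → ℝ) (hx : inIntK x) (hs : inIntK s)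
    (τ' ν' : ℝ) (hτ : τ' ∈ Set.Ioo (0 : ℝ) 1) (hν : 0 < ν')
    (hR : op2 (Rxs x s - ν' • (1 : Matrix (Idx d) (Idx d) ℝ)) ≤ τ' * ν')
    (u v h : Idx d → ℝ)
    (huv : (matV s).mulVec u + (matV x).mulVec v = h) (hdot : 0 ≤ dotV u v) :
    vnorm ((TV x)⁻¹.mulVec u) ≤ vnorm ((TV x * (matV x)⁻¹).mulVec h) / ((1 - τ') * ν') ∧
    vnorm ((TV x).mulVec v) ≤ 2 * vnorm ((TV x * (matV x)⁻¹).mulVec h) / (1 - τ') :=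
  scaled_solution_bounds' x s hx hs τ' ν' hτ hν hR u v h huv hdot
end SOCP
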